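/- Let A ∈ ℝ^{n×n} be symmetric with nonnegative entries and zero diagonal, let G be the graph on V = {1,…,n} with an edge between i and i' exactly when A_{ii'} > 0, suppose G has exactly k connected components C₁,…,C_k, and let u^{(1)},…,u^{(k)} be any orthonormal basis of the kernel of the graph Laplacian L = D − A. Define the feature vector of node i as x^{(i)} = (u^{(1)}_i,…,u^{(k)}_i)ᵀ ∈ ℝ^k. Then for any two nodes i and j lying in different connected components of G, the feature vectors are orthogonal: ⟨x^{(i)}, x^{(j)}⟩ = 0; moreover, for every node i, ‖x^{(i)}‖² = 1/|C| where C is the connected component containing i (so in particular every feature vector is nonzero). -/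

import Mathlib

open Finset Matrix

/-- let `G` (edges exactly where `A_{ii'} > 0`) have exactly `k`
connected components, and let `u 0, …, u (k-1)` be an orthonormal basis of the kernel
of the graph Laplacian `L = D − A` (orthonormal for the standard inner product, with
span equal to the kernel), with feature vectors `x^{(i)} = (u 0 i, …, u (k-1) i)`.
Then feature vectors of nodes in different connected components are orthogonal, every
node's feature vector has squared norm `1/|C|` where `C` is the node's connected
component, and in particular every feature vector is nonzero. -/
theorem feature_vectors_orthogonal_across_components {n k : ℕ}
    (A : Matrix (Fin n) (Fin n) ℝ)
    (hAsymm : ∀ i j, A i j = A j i) (hAnonneg : ∀ i j, 0 ≤ A i j)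
    (hAdiag : ∀ i, A i i = 0)
    (G : SimpleGraph (Fin n)) (hG : ∀ i j, G.Adj i j ↔ 0 < A i j)
    (hk : Nat.card G.ConnectedComponent = k)
    (u : Fin k → (Fin n → ℝ))
    (hker : ∀ a : Fin k, u a ∈ LinearMap.ker
      (Matrix.toLin' (Matrix.diagonal (fun i => ∑ j, A i j) - A)))
    (hspan : Submodule.span ℝ (Set.range u) = LinearMap.ker
      (Matrix.toLin' (Matrix.diagonal (fun i => ∑ j, A i j) - A)))
    (horth : ∀ a b : Fin k, ∑ i : Fin n, u a i * u b i =
      if a = b then (1 : ℝ) else 0) :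
    (∀ i j : Fin n, ¬ G.Reachable i j →
        ∑ a : Fin k, u a i * u a j = 0) ∧
      (∀ i : Fin n, ∑ a : Fin k, (u a i) ^ 2 =
        1 / (Nat.card {j : Fin n // G.Reachable i j} : ℝ)) ∧
      (∀ i : Fin n, (fun a : Fin k => u a i) ≠ 0) := by
  classical
  set L : Matrix (Fin n) (Fin n) ℝ := Matrix.diagonal (fun i => ∑ j, A i j) - A with hLdef
  -- mulVec formula
  have hmulvec : ∀ (x : Fin n → ℝ) (i : Fin n),
      L.mulVec x i = ∑ j, A i j * (x i - x j) := by
    intro x i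
    have h1 : L.mulVec x i = (∑ j, A i j) * x i - ∑ j, A i j * x j := by
      rw [hLdef, Matrix.sub_mulVec]
      simp only [Pi.sub_apply]
      have ha : Matrix.mulVec (Matrix.diagonal (fun i => ∑ j, A i j)) x i
          = (∑ j, A i j) * x i := by
        simp [Matrix.mulVec, dotProduct, Matrix.diagonal_apply, ite_mul,
          Finset.sum_ite_eq, mul_comm]
      have hb : Matrix.mulVec A x i = ∑ j, A i j * x j := by
        simp [Matrix.mulVec, dotProduct]
      rw [ha, hb]
    rw [h1, Finset.sum_mul, ← Finset.sum_sub_distrib]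
    exact Finset.sum_congr rfl fun j _ => by ring
  -- kernel elements are constant on components
  have hkerchar : ∀ x : Fin n → ℝ, Matrix.toLin' L x = 0 →
      ∀ i j : Fin n, G.Reachable i j → x i = x j := by
    intro x hx
    have hmv : L.mulVec x = 0 := by rwa [Matrix.toLin'_apply] at hx
    have hzero : ∑ i, ∑ j, A i j * (x i - x j) ^ 2 = 0 := by
      have h1 : ∑ i, x i * (∑ j, A i j * (x i - x j)) = 0 := by
        simp_rw [← hmulvec, hmv]
        simp
      have hswap : ∑ i, ∑ j, A i j * ((x i - x j) * (- x j)) =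
          ∑ i, ∑ j, A i j * ((x i - x j) * x i) := by
        rw [Finset.sum_comm]
        exact Finset.sum_congr rfl fun a _ => Finset.sum_congr rfl fun b _ => by
          rw [hAsymm]; ring
      calc ∑ i, ∑ j, A i j * (x i - x j) ^ 2
          = ∑ i, ∑ j, (A i j * ((x i - x j) * x i) + A i j * ((x i - x j) * (- x j))) :=
            Finset.sum_congr rfl fun i _ => Finset.sum_congr rfl fun j _ => by ring
        _ = (∑ i, ∑ j, A i j * ((x i - x j) * x i))
            + ∑ i, ∑ j, A i j * ((x i - x j) * (- x j)) := by
            rw [← Finset.sum_add_distrib]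
            exact Finset.sum_congr rfl fun i _ => Finset.sum_add_distrib
        _ = 2 * ∑ i, ∑ j, A i j * ((x i - x j) * x i) := by rw [hswap]; ring
        _ = 2 * ∑ i, x i * (∑ j, A i j * (x i - x j)) := by
            congr 1
            exact Finset.sum_congr rfl fun i _ => by
              rw [Finset.mul_sum]
              exact Finset.sum_congr rfl fun j _ => by ring
        _ = 0 := by rw [h1]; ring
    have houter := (Finset.sum_eq_zero_iff_of_nonneg
      (fun i _ => Finset.sum_nonneg fun j _ =>
        mul_nonneg (hAnonneg i j) (sq_nonneg _))).mp hzero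
    have hterm : ∀ i j : Fin n, A i j * (x i - x j) ^ 2 = 0 := by
      intro i j
      exact (Finset.sum_eq_zero_iff_of_nonneg
        (fun j _ => mul_nonneg (hAnonneg i j) (sq_nonneg _))).mp
        (houter i (Finset.mem_univ i)) j (Finset.mem_univ j)
    have hedge : ∀ i j : Fin n, G.Adj i j → x i = x j := by
      intro i j hij
      have hA : 0 < A i j := (hG i j).mp hij
      rcases mul_eq_zero.mp (hterm i j) with h | h
      · exact absurd h (ne_of_gt hA)
      · have := (pow_eq_zero_iff two_ne_zero).mp h
        linarith [sub_eq_zero.mp this]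
    intro i j hr
    obtain ⟨w⟩ := hr
    induction w with
    | nil => rfl
    | cons h p ih => exact (hedge _ _ h).trans ih
  -- components
  haveI hFin : Finite G.ConnectedComponent := Quot.finite _
  haveI hFt : Fintype G.ConnectedComponent := Fintype.ofFinite _
  set C : Fin n → G.ConnectedComponent := G.connectedComponentMk with hCdef
  have hCeq : ∀ i j : Fin n, C i = C j ↔ G.Reachable i j := fun i j =>
    SimpleGraph.ConnectedComponent.eq
  set S : G.ConnectedComponent → Finset (Fin n) :=
    fun c => Finset.univ.filter (fun i => C i = c) with hSdef
  set m : G.ConnectedComponent → ℝ := fun c => ((S c).card : ℝ) with hmdef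
  have hmpos : ∀ c, 0 < m c := by
    intro c
    obtain ⟨i, hi⟩ := c.exists_rep
    have hmem : i ∈ S c := by
      simp only [hSdef, Finset.mem_filter, Finset.mem_univ, true_and]
      exact hi
    have h0 : 0 < (S c).card := Finset.card_pos.mpr ⟨i, hmem⟩
    show (0 : ℝ) < ((S c).card : ℝ)
    exact_mod_cast h0
  have hss : ∀ c, Real.sqrt (m c) * Real.sqrt (m c) = m c :=
    fun c => Real.mul_self_sqrt (le_of_lt (hmpos c))
  set v : G.ConnectedComponent → Fin n → ℝ :=
    fun c i => if C i = c then (Real.sqrt (m c))⁻¹ else 0 with hvdef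
  have huconst : ∀ (a : Fin k) (i j : Fin n), C i = C j → u a i = u a j := by
    intro a i j h
    exact hkerchar (u a) (LinearMap.mem_ker.mp (hker a)) i j ((hCeq i j).mp h)
  -- expansion of u in terms of v
  have hexp : ∀ (a : Fin k) (i : Fin n),
      u a i = ∑ c, (∑ j, u a j * v c j) * v c i := by
    intro a i
    have h1 : ∀ c, (∑ j, u a j * v c j) * v c i =
        if C i = c then (∑ j, u a j * v c j) * (Real.sqrt (m c))⁻¹ else 0 := by
      intro c
      by_cases h : C i = c <;> simp [hvdef, h]
    rw [Finset.sum_congr rfl fun c _ => h1 c, Finset.sum_ite_eq]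
    try simp only [Finset.mem_univ, if_true]
    have h2 : ∑ j, u a j * v (C i) j
        = m (C i) * (u a i * (Real.sqrt (m (C i)))⁻¹) := by
      have h3 : ∀ j, u a j * v (C i) j =
          if C j = C i then u a i * (Real.sqrt (m (C i)))⁻¹ else 0 := by
        intro j
        by_cases h : C j = C i
        · simp [hvdef, h, huconst a j i h]
        · simp [hvdef, h]
      rw [Finset.sum_congr rfl fun j _ => h3 j, ← Finset.sum_filter,
        Finset.sum_const, nsmul_eq_mul]
    rw [h2]
    have h4 : m (C i) * (u a i * (Real.sqrt (m (C i)))⁻¹) * (Real.sqrt (m (C i)))⁻¹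
        = u a i * (m (C i) * (Real.sqrt (m (C i)) * Real.sqrt (m (C i)))⁻¹) := by
      rw [mul_inv]; ring
    rw [h4, hss, mul_inv_cancel₀ (ne_of_gt (hmpos _)), mul_one]
  -- change of basis matrix is square orthogonal
  have hcard : Fintype.card G.ConnectedComponent = k := by
    rw [← Nat.card_eq_fintype_card, hk]
  let e : G.ConnectedComponent ≃ Fin k := Fintype.equivFinOfCardEq hcard
  set Dm : Matrix (Fin k) (Fin k) ℝ :=
    fun a b => ∑ j, u a j * v (e.symm b) j with hDm
  have hDDT : Dm * Dmᵀ = 1 := by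
    ext a b
    rw [Matrix.mul_apply, Matrix.one_apply]
    simp only [Matrix.transpose_apply]
    simp only [hDm]
    rw [Equiv.sum_comp e.symm
      (fun c => (∑ j, u a j * v c j) * (∑ j, u b j * v c j))]
    calc ∑ c, (∑ j, u a j * v c j) * (∑ j, u b j * v c j)
        = ∑ c, ∑ i, (u a i * v c i) * (∑ j, u b j * v c j) :=
          Finset.sum_congr rfl fun c _ => Finset.sum_mul _ _ _
      _ = ∑ i, ∑ c, (u a i * v c i) * (∑ j, u b j * v c j) := Finset.sum_comm
      _ = ∑ i, u a i * u b i := by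
          refine Finset.sum_congr rfl fun i _ => ?_
          have h5 : ∑ c, (u a i * v c i) * (∑ j, u b j * v c j)
              = u a i * ∑ c, (∑ j, u b j * v c j) * v c i := by
            rw [Finset.mul_sum]
            exact Finset.sum_congr rfl fun c _ => by ring
          rw [h5, ← hexp b i]
      _ = if a = b then 1 else 0 := horth a b
  have hDTD : Dmᵀ * Dm = 1 := mul_eq_one_comm.mp hDDT
  have hsumd : ∀ c c' : G.ConnectedComponent,
      ∑ a : Fin k, (∑ j, u a j * v c j) * (∑ j, u a j * v c' j)
        = if c = c' then (1 : ℝ) else 0 := by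
    intro c c'
    have h1 := Matrix.ext_iff.mpr hDTD (e c) (e c')
    rw [Matrix.mul_apply, Matrix.one_apply] at h1
    simp only [Matrix.transpose_apply] at h1
    simp only [hDm, Equiv.symm_apply_apply,
      EmbeddingLike.apply_eq_iff_eq] at h1
    exact h1
  -- main projection identity
  have hmain : ∀ i j : Fin n, ∑ a, u a i * u a j = ∑ c, v c i * v c j := by
    intro i j
    calc ∑ a, u a i * u a j
        = ∑ a, ∑ c, ∑ c', ((∑ p, u a p * v c p) * (∑ p, u a p * v c' p))
            * (v c i * v c' j) := by
          refine Finset.sum_congr rfl fun a _ => ?_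
          rw [hexp a i, hexp a j, Finset.sum_mul_sum]
          exact Finset.sum_congr rfl fun c _ => Finset.sum_congr rfl fun c' _ => by ring
      _ = ∑ c, ∑ c', (∑ a, (∑ p, u a p * v c p) * (∑ p, u a p * v c' p))
            * (v c i * v c' j) := by
          rw [Finset.sum_comm]
          refine Finset.sum_congr rfl fun c _ => ?_
          rw [Finset.sum_comm]
          exact Finset.sum_congr rfl fun c' _ => (Finset.sum_mul _ _ _).symm
      _ = ∑ c, ∑ c', (if c = c' then (1 : ℝ) else 0) * (v c i * v c' j) :=
          Finset.sum_congr rfl fun c _ => Finset.sum_congr rfl fun c' _ => by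
            rw [hsumd]
      _ = ∑ c, v c i * v c j := by
          refine Finset.sum_congr rfl fun c _ => ?_
          simp [ite_mul, Finset.sum_ite_eq]
  -- cardinality of reachability set
  have hcardcomp : ∀ i : Fin n,
      (Nat.card {j : Fin n // G.Reachable i j}) = (S (C i)).card := by
    intro i
    rw [Nat.card_eq_fintype_card, Fintype.card_subtype]
    congr 1
    rw [hSdef]
    ext j
    simp only [Finset.mem_filter, Finset.mem_univ, true_and]
    constructor
    · intro h; exact (hCeq j i).mpr h.symm
    · intro h; exact ((hCeq j i).mp h).symm
  -- squared norm
  have hnorm : ∀ i : Fin n, ∑ a : Fin k, (u a i) ^ 2 =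
      1 / (Nat.card {j : Fin n // G.Reachable i j} : ℝ) := by
    intro i
    calc ∑ a, (u a i) ^ 2 = ∑ a, u a i * u a i :=
          Finset.sum_congr rfl fun a _ => by ring
      _ = ∑ c, v c i * v c i := hmain i i
      _ = (Real.sqrt (m (C i)))⁻¹ * (Real.sqrt (m (C i)))⁻¹ := by
          have h1 : ∀ c, v c i * v c i =
              if C i = c then (Real.sqrt (m c))⁻¹ * (Real.sqrt (m c))⁻¹ else 0 := by
            intro c
            by_cases h : C i = c <;> simp [hvdef, h]
          rw [Finset.sum_congr rfl fun c _ => h1 c, Finset.sum_ite_eq]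
          try simp only [Finset.mem_univ, if_true]
      _ = (m (C i))⁻¹ := by rw [← mul_inv, hss]
      _ = 1 / (Nat.card {j : Fin n // G.Reachable i j} : ℝ) := by
          rw [one_div, hcardcomp i]
  refine ⟨?_, hnorm, ?_⟩
  · intro i j hnr
    rw [hmain i j]
    apply Finset.sum_eq_zero
    intro c _
    have hne : C i ≠ C j := fun h => hnr ((hCeq i j).mp h)
    by_cases hc : C i = c
    · have hjc : ¬ C j = c := fun h => hne (hc.trans h.symm)
      simp [hvdef, hjc]
    · simp [hvdef, hc]
  · intro i hzero
    have h0 : ∑ a : Fin k, (u a i) ^ 2 = 0 := by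
      apply Finset.sum_eq_zero
      intro a _
      have : u a i = 0 := congrFun hzero a
      simp [this]
    rw [hnorm i] at h0
    haveI : Nonempty {j : Fin n // G.Reachable i j} := ⟨⟨i, ⟨SimpleGraph.Walk.nil⟩⟩⟩
    have hpos : 0 < (Nat.card {j : Fin n // G.Reachable i j} : ℝ) := by
      exact_mod_cast Nat.card_pos
    have := one_div_pos.mpr hpos
    linarith
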